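/- Let X ∈ ℝ^{m×n} be nonzero with largest and second largest singular values σ₁ and σ₂ (σ₂ = 0 if min(m,n) = 1), and let τ satisfy σ₂ ≤ τ < σ₁. Then X has a unique best rank-one approximation T₁(X) (the unique minimizer of ‖X − Z‖_F over matrices Z of rank at most 1), the function Y ↦ τ‖Y‖_* + ½‖Y − X‖_F² has a unique minimizer Y* over ℝ^{m×n}, and Y* = ((σ₁ − τ)/σ₁)·T₁(X). Consequently Y*/‖Y*‖_F = T₁(X)/‖T₁(X)‖_F, i.e., one step of singular value soft thresholding followed by normalization coincides with one step of best rank-one truncation followed by normalization. -/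

import Mathlib

open Matrix

/-- Frobenius norm of a real matrix. -/
noncomputable def frobNorm {m n : ℕ} (X : Matrix (Fin m) (Fin n) ℝ) : ℝ :=
  Real.sqrt (∑ i, ∑ j, (X i j) ^ 2)

/-- The singular values of `X` (with multiplicity, padded by zeros): the square
roots of the eigenvalues of `Xᵀ * X`. -/
noncomputable def singVals {m n : ℕ} (X : Matrix (Fin m) (Fin n) ℝ) : Fin n → ℝ :=
  fun i => Real.sqrt ((show (Xᵀ * X).IsHermitian from Matrix.isHermitian_conjTranspose_mul_self X).eigenvalues i)

/-- Nuclear norm of a real matrix: the sum of its singular values. -/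
noncomputable def nuclearNorm {m n : ℕ} (X : Matrix (Fin m) (Fin n) ℝ) : ℝ :=
  ∑ i, singVals X i

namespace STAux
variable {m n k : ℕ}





noncomputable def fip (A B : Matrix (Fin m) (Fin n) ℝ) : ℝ := ∑ i, ∑ j, A i j * B i j

lemma fip_comm (A B : Matrix (Fin m) (Fin n) ℝ) : fip A B = fip B A := by
  unfold fip; congr 1; ext i; congr 1; ext j; ring

lemma fip_self_nonneg (A : Matrix (Fin m) (Fin n) ℝ) : 0 ≤ fip A A := by
  unfold fip
  exact Finset.sum_nonneg fun i _ => Finset.sum_nonneg fun j _ => mul_self_nonneg _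

lemma frobNorm_sq (A : Matrix (Fin m) (Fin n) ℝ) : frobNorm A ^ 2 = fip A A := by
  unfold frobNorm fip
  rw [Real.sq_sqrt]
  · congr 1; ext i; congr 1; ext j; ring
  · exact Finset.sum_nonneg fun i _ => Finset.sum_nonneg fun j _ => sq_nonneg _

lemma frobNorm_nonneg (A : Matrix (Fin m) (Fin n) ℝ) : 0 ≤ frobNorm A := Real.sqrt_nonneg _

lemma frob_le_iff (P Q : Matrix (Fin m) (Fin n) ℝ) : frobNorm P ≤ frobNorm Q ↔ fip P P ≤ fip Q Q := by
  rw [← frobNorm_sq, ← frobNorm_sq]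
  constructor
  · intro h; exact pow_le_pow_left₀ (frobNorm_nonneg P) h 2
  · intro h
    have := Real.sqrt_le_sqrt h
    rwa [Real.sqrt_sq (frobNorm_nonneg P), Real.sqrt_sq (frobNorm_nonneg Q)] at this

lemma fip_sub_right (A B C : Matrix (Fin m) (Fin n) ℝ) : fip A (B - C) = fip A B - fip A C := by
  unfold fip
  simp only [Matrix.sub_apply, mul_sub, Finset.sum_sub_distrib]

lemma fip_sub_left (A B C : Matrix (Fin m) (Fin n) ℝ) : fip (B - C) A = fip B A - fip C A := by
  rw [fip_comm, fip_sub_right, fip_comm A B, fip_comm A C]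

lemma fip_sub_sub (P Q : Matrix (Fin m) (Fin n) ℝ) :
    fip (P - Q) (P - Q) = fip P P - 2 * fip P Q + fip Q Q := by
  rw [fip_sub_right, fip_sub_left, fip_sub_left, fip_comm Q P]; ring

lemma fip_smul_right (c : ℝ) (A B : Matrix (Fin m) (Fin n) ℝ) : fip A (c • B) = c * fip A B := by
  unfold fip
  rw [Finset.mul_sum]; congr 1; ext i
  rw [Finset.mul_sum]; congr 1; ext j
  simp [Matrix.smul_apply]; ring

lemma vecMulVec_mulVec (a : Fin m → ℝ) (b x : Fin n → ℝ) :
    vecMulVec a b *ᵥ x = (b ⬝ᵥ x) • a := by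
  funext i
  simp [vecMulVec, mulVec, dotProduct, Finset.mul_sum, Finset.sum_mul, mul_comm, mul_assoc, mul_left_comm]

lemma transpose_vecMulVec (a : Fin m → ℝ) (b : Fin n → ℝ) :
    (vecMulVec a b)ᵀ = vecMulVec b a := by
  ext i j; simp [vecMulVec, Matrix.transpose_apply]; ring

lemma fip_vecMulVec (M : Matrix (Fin m) (Fin n) ℝ) (a : Fin m → ℝ) (b : Fin n → ℝ) :
    fip M (vecMulVec a b) = a ⬝ᵥ (M *ᵥ b) := by
  unfold fip
  simp only [vecMulVec, Matrix.of_apply, dotProduct, mulVec, Finset.mul_sum]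
  exact Finset.sum_congr rfl fun i _ => Finset.sum_congr rfl fun j _ => by ring

lemma dot_XX (X : Matrix (Fin m) (Fin n) ℝ) (a b : Fin n → ℝ) :
    (X *ᵥ a) ⬝ᵥ (X *ᵥ b) = a ⬝ᵥ ((Xᵀ * X) *ᵥ b) := by
  rw [← mulVec_mulVec, Matrix.dotProduct_mulVec a, vecMul_transpose]

lemma dot_cauchy {k : ℕ} (a b : Fin k → ℝ) : (a ⬝ᵥ b) ^ 2 ≤ (a ⬝ᵥ a) * (b ⬝ᵥ b) := by
  have := Finset.sum_mul_sq_le_sq_mul_sq Finset.univ a b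
  simpa [dotProduct, sq] using this

lemma dot_sum_smul (b : Fin n → ℝ) (c : Fin k → ℝ) (w : Fin k → Fin n → ℝ) :
    b ⬝ᵥ (∑ i, c i • w i) = ∑ i, c i * (b ⬝ᵥ w i) := by
  simp only [dotProduct, Finset.sum_apply, Pi.smul_apply, smul_eq_mul, Finset.mul_sum]
  rw [Finset.sum_comm]
  exact Finset.sum_congr rfl fun i _ => Finset.sum_congr rfl fun j _ => by ring

lemma mulVec_sum_smul (A : Matrix (Fin m) (Fin n) ℝ) (c : Fin k → ℝ) (w : Fin k → Fin n → ℝ) :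
    A *ᵥ (∑ i, c i • w i) = ∑ i, c i • (A *ᵥ w i) := by
  funext j
  rw [show (A *ᵥ (∑ i, c i • w i)) j = A j ⬝ᵥ (∑ i, c i • w i) from rfl, dot_sum_smul]
  simp only [Finset.sum_apply, Pi.smul_apply, smul_eq_mul]
  rfl

lemma parseval {v : Fin n → Fin n → ℝ}
    (hvc : ∀ x : Fin n → ℝ, x = ∑ i, (v i ⬝ᵥ x) • v i)
    (b : Fin n → ℝ) : b ⬝ᵥ b = ∑ i, (v i ⬝ᵥ b) ^ 2 := by
  have h := congrArg (fun y => b ⬝ᵥ y) (hvc b)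
  rw [dot_sum_smul] at h
  rw [h]
  refine Finset.sum_congr rfl fun i _ => ?_
  rw [dotProduct_comm b (v i)]; ring

lemma expand_mulVec {v : Fin n → Fin n → ℝ}
    (hvc : ∀ x : Fin n → ℝ, x = ∑ i, (v i ⬝ᵥ x) • v i)
    (A : Matrix (Fin n) (Fin n) ℝ) (μ : Fin n → ℝ)
    (hve : ∀ i, A *ᵥ v i = μ i • v i) (b : Fin n → ℝ) :
    A *ᵥ b = ∑ i, ((v i ⬝ᵥ b) * μ i) • v i := by
  have h := congrArg (fun y => A *ᵥ y) (hvc b)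
  rw [mulVec_sum_smul] at h
  rw [h]
  refine Finset.sum_congr rfl fun i _ => ?_
  rw [hve i, smul_smul]

lemma quad {v : Fin n → Fin n → ℝ}
    (hvc : ∀ x : Fin n → ℝ, x = ∑ i, (v i ⬝ᵥ x) • v i)
    (A : Matrix (Fin n) (Fin n) ℝ) (μ : Fin n → ℝ)
    (hve : ∀ i, A *ᵥ v i = μ i • v i) (b : Fin n → ℝ) :
    b ⬝ᵥ (A *ᵥ b) = ∑ i, μ i * (v i ⬝ᵥ b) ^ 2 := by
  rw [expand_mulVec hvc A μ hve b, dot_sum_smul]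
  refine Finset.sum_congr rfl fun i _ => ?_
  rw [dotProduct_comm b (v i)]; ring

lemma exists_eigenbasis (A : Matrix (Fin n) (Fin n) ℝ) (hA : A.IsHermitian) :
    ∃ v : Fin n → (Fin n → ℝ),
      (∀ i j, v i ⬝ᵥ v j = if i = j then 1 else 0) ∧
      (∀ i, A *ᵥ v i = hA.eigenvalues i • v i) ∧
      (∀ x : Fin n → ℝ, x = ∑ i, (v i ⬝ᵥ x) • v i) := by
  refine ⟨fun i => ⇑(hA.eigenvectorBasis i), ?_, ?_, ?_⟩
  · intro i j
    have h := hA.eigenvectorBasis.orthonormal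
    rw [orthonormal_iff_ite] at h
    have := h i j
    rw [← this]
    simp [EuclideanSpace.inner_eq_star_dotProduct]
    exact dotProduct_comm _ _
  · intro i; exact hA.mulVec_eigenvectorBasis i
  · intro x
    have h := (hA.eigenvectorBasis.sum_repr ((WithLp.equiv 2 (Fin n → ℝ)).symm x))
    have h2 : ∀ i, hA.eigenvectorBasis.repr ((WithLp.equiv 2 (Fin n → ℝ)).symm x) i
        = ⇑(hA.eigenvectorBasis i) ⬝ᵥ x := by
      intro i
      rw [OrthonormalBasis.repr_apply_apply]
      simp [EuclideanSpace.inner_eq_star_dotProduct]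
      exact dotProduct_comm _ _
    have h4 := congrArg (WithLp.linearEquiv 2 ℝ (Fin n → ℝ)) h
    rw [map_sum] at h4
    simp only [_root_.map_smul, h2] at h4
    exact h4.symm

lemma fip_decomp {v : Fin n → Fin n → ℝ}
    (hvc : ∀ x : Fin n → ℝ, x = ∑ i, (v i ⬝ᵥ x) • v i)
    (W Z : Matrix (Fin m) (Fin n) ℝ) :
    (∑ i, ∑ j, W i j * Z i j) = ∑ k, (Z *ᵥ v k) ⬝ᵥ (W *ᵥ v k) := by
  have hZ : ∀ i j, Z i j = ∑ k, (Z *ᵥ v k) i * v k j := by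
    intro i j
    have h := congrFun (hvc (fun j' => Z i j')) j
    simp only [Finset.sum_apply, Pi.smul_apply, smul_eq_mul] at h
    rw [h]
    refine Finset.sum_congr rfl fun k' _ => ?_
    have : v k' ⬝ᵥ (fun j' => Z i j') = (Z *ᵥ v k') i := by
      simp only [dotProduct, mulVec]
      exact Finset.sum_congr rfl fun j' _ => by ring
    rw [this]
  calc (∑ i, ∑ j, W i j * Z i j)
      = ∑ i, ∑ j, ∑ k, W i j * ((Z *ᵥ v k) i * v k j) := by
        refine Finset.sum_congr rfl fun i _ => Finset.sum_congr rfl fun j _ => ?_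
        rw [← Finset.mul_sum, ← hZ i j]
    _ = ∑ k, ∑ i, ∑ j, W i j * ((Z *ᵥ v k) i * v k j) := by
        rw [show (∑ i, ∑ j, ∑ k, W i j * ((Z *ᵥ v k) i * v k j))
            = ∑ i, ∑ k, ∑ j, W i j * ((Z *ᵥ v k) i * v k j) from
          Finset.sum_congr rfl fun i _ => Finset.sum_comm]
        exact Finset.sum_comm
    _ = ∑ k, (Z *ᵥ v k) ⬝ᵥ (W *ᵥ v k) := by
        refine Finset.sum_congr rfl fun k' _ => ?_
        rw [dotProduct]
        refine Finset.sum_congr rfl fun i _ => ?_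
        rw [show (W *ᵥ v k') i = ∑ j, W i j * v k' j from rfl, Finset.mul_sum]
        exact Finset.sum_congr rfl fun j _ => by ring

lemma rank_vecMulVec_le (a : Fin m → ℝ) (b : Fin n → ℝ) : (vecMulVec a b).rank ≤ 1 := by
  rw [vecMulVec_eq (Fin 1)]
  calc (replicateCol (Fin 1) a * replicateRow (Fin 1) b).rank ≤ (replicateCol (Fin 1) a).rank := rank_mul_le_left _ _
    _ ≤ Fintype.card (Fin 1) := rank_le_card_width _
    _ = 1 := by simp

lemma rank_le_one_exists (Z : Matrix (Fin m) (Fin n) ℝ) (h : Z.rank ≤ 1) :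
    ∃ a b, Z = vecMulVec a b := by
  rw [Matrix.rank] at h
  obtain ⟨v₀, hv₀⟩ := finrank_le_one_iff.mp h
  have hmem : ∀ j : Fin n, Z *ᵥ Pi.single j 1 ∈ LinearMap.range Z.mulVecLin := by
    intro j
    exact LinearMap.mem_range.mpr ⟨Pi.single j 1, mulVecLin_apply _ _⟩
  have hch : ∀ j : Fin n, ∃ c : ℝ, c • v₀ = ⟨Z *ᵥ Pi.single j 1, hmem j⟩ := fun j => hv₀ _
  choose c hc using hch
  refine ⟨(v₀ : Fin m → ℝ), c, ?_⟩
  ext i j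
  have h3 := congrFun (congrArg (Subtype.val) (hc j)) i
  simp only [Submodule.coe_smul, Pi.smul_apply, smul_eq_mul] at h3
  have h4 : (Z *ᵥ Pi.single j 1) i = Z i j := by
    rw [mulVec_single]; simp
  rw [h4] at h3
  rw [vecMulVec]
  simp only [Matrix.of_apply]
  rw [← h3]
  ring

lemma eig_nonneg (X : Matrix (Fin m) (Fin n) ℝ) (i : Fin n) :
    0 ≤ (show (Xᵀ * X).IsHermitian from Matrix.isHermitian_conjTranspose_mul_self X).eigenvalues i := by
  have h : (Xᵀ * X).PosSemidef := by
    have := Matrix.posSemidef_conjTranspose_mul_self X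
    rwa [conjTranspose_eq_transpose_of_trivial] at this
  exact h.eigenvalues_nonneg i

lemma dot_self_nonneg {k : ℕ} (a : Fin k → ℝ) : 0 ≤ a ⬝ᵥ a :=
  Finset.sum_nonneg fun i _ => mul_self_nonneg _

lemma fip_self_eq_zero {m n : ℕ} {A : Matrix (Fin m) (Fin n) ℝ} (h : fip A A ≤ 0) : A = 0 := by
  have h0 : fip A A = 0 := le_antisymm h (fip_self_nonneg A)
  unfold fip at h0
  replace h0 := (Finset.sum_eq_zero_iff_of_nonneg
    (fun i _ => Finset.sum_nonneg fun j _ => mul_self_nonneg _)).mp h0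
  ext i j
  have := (Finset.sum_eq_zero_iff_of_nonneg (fun j _ => mul_self_nonneg _)).mp
    (h0 i (Finset.mem_univ i)) j (Finset.mem_univ j)
  simpa [mul_self_eq_zero] using this


lemma le_of_sq_le_sq {p q : ℝ} (h : p ^ 2 ≤ q ^ 2) (hq : 0 ≤ q) : p ≤ q := by
  nlinarith [sq_nonneg (p - q), sq_nonneg (p + q)]

lemma sq_le_of_sqrt_le {x σ : ℝ} (hx : 0 ≤ x) (h : Real.sqrt x ≤ σ) : x ≤ σ ^ 2 := by
  nlinarith [Real.sq_sqrt hx, Real.sqrt_nonneg x]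

lemma ey_bound {σ₁ p aa bb : ℝ} (h0 : 0 < σ₁) (haa : 0 ≤ aa) (hbb : 0 ≤ bb)
    (hp2 : p ^ 2 ≤ σ₁ ^ 2 * (aa * bb)) : 2 * p ≤ σ₁ ^ 2 + aa * bb := by
  have hs0 : 0 ≤ Real.sqrt (aa * bb) := Real.sqrt_nonneg _
  have hs2 : Real.sqrt (aa * bb) ^ 2 = aa * bb := Real.sq_sqrt (mul_nonneg haa hbb)
  have hps : p ≤ σ₁ * Real.sqrt (aa * bb) := by
    refine le_of_sq_le_sq ?_ (mul_nonneg h0.le hs0)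
    rw [mul_pow, hs2]; exact hp2
  nlinarith [sq_nonneg (σ₁ - Real.sqrt (aa * bb))]

lemma ey_eqcase {σ₁ p aa bb : ℝ} (h0 : 0 < σ₁) (haa : 0 ≤ aa) (hbb : 0 ≤ bb)
    (hp2 : p ^ 2 ≤ σ₁ ^ 2 * (aa * bb)) (hle : -2 * p + aa * bb ≤ -σ₁ ^ 2) :
    p = σ₁ ^ 2 ∧ aa * bb = σ₁ ^ 2 ∧ 0 < aa ∧ 0 < bb := by
  have hs0 : 0 ≤ Real.sqrt (aa * bb) := Real.sqrt_nonneg _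
  have hs2 : Real.sqrt (aa * bb) ^ 2 = aa * bb := Real.sq_sqrt (mul_nonneg haa hbb)
  have hps : p ≤ σ₁ * Real.sqrt (aa * bb) := by
    refine le_of_sq_le_sq ?_ (mul_nonneg h0.le hs0)
    rw [mul_pow, hs2]; exact hp2
  have h1 : Real.sqrt (aa * bb) = σ₁ := by nlinarith [sq_nonneg (Real.sqrt (aa * bb) - σ₁)]
  have h2 : aa * bb = σ₁ ^ 2 := by rw [← hs2, h1]
  have hpv : p = σ₁ ^ 2 := by nlinarith
  refine ⟨hpv, h2, ?_, ?_⟩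
  · rcases haa.lt_or_eq with h | h
    · exact h
    · exfalso; rw [← h] at h2; nlinarith
  · rcases hbb.lt_or_eq with h | h
    · exact h
    · exfalso; rw [← h] at h2; nlinarith

lemma tight_cancel {aa bb xbxb p σ₁ : ℝ} (haapos : 0 < aa) (hub : xbxb ≤ σ₁ ^ 2 * bb)
    (hp2 : p ^ 2 ≤ aa * xbxb) (hpval : p = σ₁ ^ 2) (haabb : aa * bb = σ₁ ^ 2) :
    xbxb = σ₁ ^ 2 * bb := by
  have h1 : aa * xbxb ≤ aa * (σ₁ ^ 2 * bb) := by nlinarith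
  have h2 : aa * (σ₁ ^ 2 * bb) = σ₁ ^ 2 * σ₁ ^ 2 := by
    rw [show aa * (σ₁ ^ 2 * bb) = σ₁ ^ 2 * (aa * bb) by ring, haabb]
  have h3 : σ₁ ^ 2 * σ₁ ^ 2 ≤ aa * xbxb := by nlinarith
  exact mul_left_cancel₀ (ne_of_gt haapos) (by linarith)

end STAux

set_option maxHeartbeats 4000000 in
/-- If `σ₂ ≤ τ < σ₁`, then `X` has a unique best rank-one approximation `T₁(X)`,
the soft-thresholding objective `Y ↦ τ‖Y‖_* + ½‖Y − X‖_F²` has a unique minimizer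
`Y*`, and `Y* = ((σ₁−τ)/σ₁)·T₁(X)`; consequently soft thresholding followed by
normalization coincides with rank-one truncation followed by normalization. -/
theorem softThresholding_eq_rankOne_truncation {m n : ℕ}
    (X : Matrix (Fin m) (Fin n) ℝ) (hX : X ≠ 0)
    (σ₁ σ₂ τ : ℝ)
    (hσ₁ : IsGreatest (Set.range (singVals X)) σ₁)
    (hσ₂ : ∃ i₀ : Fin n, singVals X i₀ = σ₁ ∧
        IsGreatest (insert (0 : ℝ) {s : ℝ | ∃ i : Fin n, i ≠ i₀ ∧ singVals X i = s}) σ₂)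
    (hτ₁ : σ₂ ≤ τ) (hτ₂ : τ < σ₁) :
    (∃! T : Matrix (Fin m) (Fin n) ℝ, T.rank ≤ 1 ∧
        ∀ Z : Matrix (Fin m) (Fin n) ℝ, Z.rank ≤ 1 →
          frobNorm (X - T) ≤ frobNorm (X - Z)) ∧
    (∃! Y : Matrix (Fin m) (Fin n) ℝ, ∀ Z : Matrix (Fin m) (Fin n) ℝ,
        τ * nuclearNorm Y + (1 / 2) * frobNorm (Y - X) ^ 2 ≤
          τ * nuclearNorm Z + (1 / 2) * frobNorm (Z - X) ^ 2) ∧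
    ∀ T Y : Matrix (Fin m) (Fin n) ℝ,
      (T.rank ≤ 1 ∧ ∀ Z : Matrix (Fin m) (Fin n) ℝ, Z.rank ≤ 1 →
          frobNorm (X - T) ≤ frobNorm (X - Z)) →
      (∀ Z : Matrix (Fin m) (Fin n) ℝ,
          τ * nuclearNorm Y + (1 / 2) * frobNorm (Y - X) ^ 2 ≤
            τ * nuclearNorm Z + (1 / 2) * frobNorm (Z - X) ^ 2) →
      Y = ((σ₁ - τ) / σ₁) • T ∧
      (frobNorm Y)⁻¹ • Y = (frobNorm T)⁻¹ • T := by
  classical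
  obtain ⟨i₀, hi₀σ, hGr⟩ := hσ₂
  have hσ₂0 : 0 ≤ σ₂ := hGr.2 (Set.mem_insert 0 _)
  have hτ0 : 0 ≤ τ := le_trans hσ₂0 hτ₁
  have hσ₁pos : 0 < σ₁ := lt_of_le_of_lt hτ0 hτ₂
  have hστpos : 0 < σ₁ - τ := sub_pos.mpr hτ₂
  have hA : (Xᵀ * X).IsHermitian := Matrix.isHermitian_conjTranspose_mul_self X
  obtain ⟨v, hvo, hve, hvc⟩ := STAux.exists_eigenbasis (Xᵀ * X) hA
  obtain ⟨μ, hμdef⟩ : ∃ μ, μ = hA.eigenvalues := ⟨_, rfl⟩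
  rw [← hμdef] at hve
  have hμ0 : ∀ i, 0 ≤ μ i := by rw [hμdef]; exact STAux.eig_nonneg X
  have hsing : ∀ i, singVals X i = Real.sqrt (μ i) := by intro i; rw [hμdef]; rfl
  have hμi₀ : μ i₀ = σ₁ ^ 2 := by
    have h1 : Real.sqrt (μ i₀) = σ₁ := by rw [← hsing i₀]; exact hi₀σ
    rw [← h1, Real.sq_sqrt (hμ0 i₀)]
  have hμle : ∀ i, μ i ≤ σ₁ ^ 2 := by
    intro i
    have h1 : Real.sqrt (μ i) ≤ σ₁ := by rw [← hsing i]; exact hσ₁.2 ⟨i, rfl⟩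
    exact STAux.sq_le_of_sqrt_le (hμ0 i) h1
  have hμτ : ∀ i, i ≠ i₀ → μ i ≤ τ ^ 2 := by
    intro i hi
    have h1 : Real.sqrt (μ i) ≤ σ₂ := by
      rw [← hsing i]; exact hGr.2 (Set.mem_insert_of_mem _ ⟨i, hi, rfl⟩)
    have h2 : Real.sqrt (μ i) ≤ τ := le_trans h1 hτ₁
    exact STAux.sq_le_of_sqrt_le (hμ0 i) h2
  -- singular vectors
  obtain ⟨v₁, hv₁def⟩ : ∃ v₁, v₁ = v i₀ := ⟨_, rfl⟩
  have hv₁v₁ : v₁ ⬝ᵥ v₁ = 1 := by rw [hv₁def]; simpa using hvo i₀ i₀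
  have hXTXv₁ : (Xᵀ * X) *ᵥ v₁ = (σ₁ ^ 2) • v₁ := by rw [hv₁def, hve i₀, hμi₀]
  obtain ⟨u₁, hu₁def⟩ : ∃ u₁, u₁ = σ₁⁻¹ • (X *ᵥ v₁) := ⟨_, rfl⟩
  have hdotXX : ∀ a b : Fin n → ℝ, (X *ᵥ a) ⬝ᵥ (X *ᵥ b) = a ⬝ᵥ ((Xᵀ * X) *ᵥ b) :=
    STAux.dot_XX X
  have hXv₁ : (X *ᵥ v₁) ⬝ᵥ (X *ᵥ v₁) = σ₁ ^ 2 := by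
    rw [hdotXX, hXTXv₁, dotProduct_smul, smul_eq_mul, hv₁v₁, mul_one]
  have hXv₁u : X *ᵥ v₁ = σ₁ • u₁ := by
    rw [hu₁def, smul_smul, mul_inv_cancel₀ (ne_of_gt hσ₁pos), one_smul]
  have hu₁u₁ : u₁ ⬝ᵥ u₁ = 1 := by
    rw [hu₁def, smul_dotProduct, dotProduct_smul, smul_eq_mul, smul_eq_mul, hXv₁]
    field_simp
  have hXTu₁ : Xᵀ *ᵥ u₁ = σ₁ • v₁ := by
    rw [hu₁def, mulVec_smul, mulVec_mulVec, hXTXv₁, smul_smul]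
    congr 1
    field_simp
  have hu₁X : ∀ x : Fin n → ℝ, u₁ ⬝ᵥ (X *ᵥ x) = σ₁ * (v₁ ⬝ᵥ x) := by
    intro x
    rw [Matrix.dotProduct_mulVec]
    rw [show u₁ ᵥ* X = Xᵀ *ᵥ u₁ by rw [← vecMul_transpose, transpose_transpose]]
    rw [hXTu₁, smul_dotProduct]
    rfl
  -- the rank-one pieces
  obtain ⟨P, hPdef⟩ : ∃ P, P = vecMulVec u₁ v₁ := ⟨_, rfl⟩
  have hPmul : ∀ x, P *ᵥ x = (v₁ ⬝ᵥ x) • u₁ := by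
    intro x; rw [hPdef]; exact STAux.vecMulVec_mulVec _ _ _
  have hPT : Pᵀ = vecMulVec v₁ u₁ := by rw [hPdef]; exact STAux.transpose_vecMulVec _ _
  have hPTmul : ∀ y, Pᵀ *ᵥ y = (u₁ ⬝ᵥ y) • v₁ := by
    intro y; rw [hPT]; exact STAux.vecMulVec_mulVec _ _ _
  have hfip_smul_left : ∀ (c : ℝ) (A B : Matrix (Fin m) (Fin n) ℝ),
      STAux.fip (c • A) B = c * STAux.fip A B := by
    intro c A B; rw [STAux.fip_comm, STAux.fip_smul_right, STAux.fip_comm]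
  have hfipXP : STAux.fip X P = σ₁ := by
    rw [hPdef, STAux.fip_vecMulVec, hXv₁u, dotProduct_smul, smul_eq_mul, hu₁u₁, mul_one]
  have hfipPP : STAux.fip P P = 1 := by
    rw [hPdef, STAux.fip_vecMulVec, STAux.vecMulVec_mulVec, hv₁v₁, one_smul, hu₁u₁]
  obtain ⟨T₀, hTdef⟩ : ∃ T₀, T₀ = σ₁ • P := ⟨_, rfl⟩
  obtain ⟨Y₀, hYdef⟩ : ∃ Y₀, Y₀ = (σ₁ - τ) • P := ⟨_, rfl⟩
  have hfipXT : STAux.fip X T₀ = σ₁ ^ 2 := by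
    rw [hTdef, STAux.fip_smul_right, hfipXP]; ring
  have hfipTT : STAux.fip T₀ T₀ = σ₁ ^ 2 := by
    rw [hTdef, STAux.fip_smul_right, hfip_smul_left, hfipPP]; ring
  have hfipXY : STAux.fip X Y₀ = σ₁ * (σ₁ - τ) := by
    rw [hYdef, STAux.fip_smul_right, hfipXP]; ring
  have hfipYY : STAux.fip Y₀ Y₀ = (σ₁ - τ) ^ 2 := by
    rw [hYdef, STAux.fip_smul_right, hfip_smul_left, hfipPP]; ring
  have hEYT : STAux.fip (X - T₀) (X - T₀) = STAux.fip X X - σ₁ ^ 2 := by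
    rw [STAux.fip_sub_sub, hfipXT, hfipTT]; ring
  have hTrank : T₀.rank ≤ 1 := by
    have hT1 : T₀ = vecMulVec (σ₁ • u₁) v₁ := by
      rw [hTdef, hPdef]
      ext i j
      simp [vecMulVec, Matrix.smul_apply, Pi.smul_apply, smul_eq_mul]
      ring
    rw [hT1]; exact STAux.rank_vecMulVec_le _ _
  -- operator-norm type bounds
  have hquadX : ∀ b : Fin n → ℝ, (X *ᵥ b) ⬝ᵥ (X *ᵥ b) = ∑ i, μ i * (v i ⬝ᵥ b) ^ 2 := by
    intro b; rw [hdotXX]; exact STAux.quad hvc _ μ hve b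
  have hpars : ∀ b : Fin n → ℝ, b ⬝ᵥ b = ∑ i, (v i ⬝ᵥ b) ^ 2 := STAux.parseval hvc
  have hXopb : ∀ b : Fin n → ℝ, (X *ᵥ b) ⬝ᵥ (X *ᵥ b) ≤ σ₁ ^ 2 * (b ⬝ᵥ b) := by
    intro b
    rw [hquadX, hpars, Finset.mul_sum]
    exact Finset.sum_le_sum fun i _ => mul_le_mul_of_nonneg_right (hμle i) (sq_nonneg _)
  -- Eckart–Young with uniqueness
  have hEY : ∀ Z : Matrix (Fin m) (Fin n) ℝ, Z.rank ≤ 1 →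
      STAux.fip X X - σ₁ ^ 2 ≤ STAux.fip (X - Z) (X - Z) ∧
      (STAux.fip (X - Z) (X - Z) ≤ STAux.fip X X - σ₁ ^ 2 → Z = T₀) := by
    intro Z hZ
    obtain ⟨a, b, hZab⟩ := STAux.rank_le_one_exists Z hZ
    have hfipXZ : STAux.fip X Z = a ⬝ᵥ (X *ᵥ b) := by rw [hZab, STAux.fip_vecMulVec]
    have hfipZZ : STAux.fip Z Z = (a ⬝ᵥ a) * (b ⬝ᵥ b) := by
      rw [hZab, STAux.fip_vecMulVec, STAux.vecMulVec_mulVec, dotProduct_smul, smul_eq_mul]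
      ring
    have haa : 0 ≤ a ⬝ᵥ a := STAux.dot_self_nonneg a
    have hbb : 0 ≤ b ⬝ᵥ b := STAux.dot_self_nonneg b
    have hp2 := STAux.dot_cauchy a (X *ᵥ b)
    have hXb := hXopb b
    have hp2' : (a ⬝ᵥ (X *ᵥ b)) ^ 2 ≤ σ₁ ^ 2 * ((a ⬝ᵥ a) * (b ⬝ᵥ b)) := by
      calc (a ⬝ᵥ (X *ᵥ b)) ^ 2 ≤ (a ⬝ᵥ a) * ((X *ᵥ b) ⬝ᵥ (X *ᵥ b)) := hp2
        _ ≤ (a ⬝ᵥ a) * (σ₁ ^ 2 * (b ⬝ᵥ b)) := mul_le_mul_of_nonneg_left hXb haa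
        _ = σ₁ ^ 2 * ((a ⬝ᵥ a) * (b ⬝ᵥ b)) := by ring
    have hXZsq : STAux.fip (X - Z) (X - Z)
        = STAux.fip X X - 2 * (a ⬝ᵥ (X *ᵥ b)) + (a ⬝ᵥ a) * (b ⬝ᵥ b) := by
      rw [STAux.fip_sub_sub, hfipXZ, hfipZZ]
    constructor
    · rw [hXZsq]
      have := STAux.ey_bound hσ₁pos haa hbb hp2'
      linarith
    · intro hle
      rw [hXZsq] at hle
      obtain ⟨hpval, haabb, haapos, hbbpos⟩ :=
        STAux.ey_eqcase hσ₁pos haa hbb hp2' (by linarith)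
      have hXbXb : (X *ᵥ b) ⬝ᵥ (X *ᵥ b) = σ₁ ^ 2 * (b ⬝ᵥ b) :=
        STAux.tight_cancel haapos hXb hp2 hpval haabb
      have hcoef : ∀ i, i ≠ i₀ → v i ⬝ᵥ b = 0 := by
        intro i hi
        have e1 : ∑ i, (σ₁ ^ 2 - μ i) * (v i ⬝ᵥ b) ^ 2
            = σ₁ ^ 2 * (b ⬝ᵥ b) - (X *ᵥ b) ⬝ᵥ (X *ᵥ b) := by
          rw [hquadX, hpars, Finset.mul_sum, ← Finset.sum_sub_distrib]
          exact Finset.sum_congr rfl fun i _ => by ring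
        have hsum : ∑ i, (σ₁ ^ 2 - μ i) * (v i ⬝ᵥ b) ^ 2 = 0 := by rw [e1, hXbXb]; ring
        have hterm := (Finset.sum_eq_zero_iff_of_nonneg
          (fun i _ => mul_nonneg (sub_nonneg.mpr (hμle i))
            (sq_nonneg (v i ⬝ᵥ b)))).mp hsum i (Finset.mem_univ i)
        have hττ : τ ^ 2 < σ₁ ^ 2 := by
          have := pow_lt_pow_left₀ hτ₂ hτ0 (two_ne_zero)
          simpa using this
        have hpos : 0 < σ₁ ^ 2 - μ i := by
          have := hμτ i hi
          linarith
        rcases mul_eq_zero.mp hterm with h | h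
        · exfalso; linarith
        · exact sq_eq_zero_iff.mp h
      obtain ⟨c, hcdef⟩ : ∃ c, c = v₁ ⬝ᵥ b := ⟨_, rfl⟩
      have hbv : b = c • v₁ := by
        conv_lhs => rw [hvc b]
        rw [Finset.sum_eq_single i₀ (fun i _ hi => by rw [hcoef i hi, zero_smul])
          (fun h => absurd (Finset.mem_univ i₀) h)]
        rw [hcdef, hv₁def]
      have hcsq : b ⬝ᵥ b = c ^ 2 := by
        rw [hpars b, Finset.sum_eq_single i₀ (fun i _ hi => by rw [hcoef i hi]; ring)
          (fun h => absurd (Finset.mem_univ i₀) h), hcdef, hv₁def]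
      have hcne : c ≠ 0 := by
        intro h
        rw [h] at hcsq
        simp at hcsq
        rw [hcsq] at hbbpos
        simp [zero_dotProduct] at hbbpos
      have hXb2 : X *ᵥ b = (c * σ₁) • u₁ := by
        rw [hbv, mulVec_smul, hXv₁u, smul_smul]
      have hau : a ⬝ᵥ u₁ = σ₁ / c := by
        have h2 : a ⬝ᵥ (X *ᵥ b) = (c * σ₁) * (a ⬝ᵥ u₁) := by
          rw [hXb2, dotProduct_smul, smul_eq_mul]
        rw [hpval] at h2
        have h3 : σ₁ * (a ⬝ᵥ u₁ * c) = σ₁ * σ₁ := by linear_combination -h2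
        have h4 : a ⬝ᵥ u₁ * c = σ₁ := mul_left_cancel₀ (ne_of_gt hσ₁pos) h3
        rw [eq_div_iff hcne]
        exact h4
      have haval : a ⬝ᵥ a = σ₁ ^ 2 / c ^ 2 := by
        rw [hcsq] at haabb
        rw [eq_div_iff (pow_ne_zero 2 hcne)]
        exact haabb
      have haeq : a = (σ₁ / c) • u₁ := by
        have hd : (a - (σ₁ / c) • u₁) ⬝ᵥ (a - (σ₁ / c) • u₁) = 0 := by
          simp only [sub_dotProduct, dotProduct_sub, smul_dotProduct, dotProduct_smul,
            smul_eq_mul]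
          rw [dotProduct_comm u₁ a, hau, hu₁u₁, haval]
          field_simp
          ring
        exact sub_eq_zero.mp (dotProduct_self_eq_zero.mp hd)
      rw [hZab, haeq, hbv, hTdef, hPdef]
      ext i j
      simp only [vecMulVec, Matrix.of_apply, Pi.smul_apply, smul_eq_mul, Matrix.smul_apply]
      field_simp
  -- spectral bound for W = X - Y₀
  have hWmulq : ∀ x : Fin n → ℝ, ((X - Y₀) *ᵥ x) ⬝ᵥ ((X - Y₀) *ᵥ x)
      = (X *ᵥ x) ⬝ᵥ (X *ᵥ x) - (σ₁ ^ 2 - τ ^ 2) * (v₁ ⬝ᵥ x) ^ 2 := by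
    intro x
    have hYx : Y₀ *ᵥ x = ((σ₁ - τ) * (v₁ ⬝ᵥ x)) • u₁ := by
      rw [hYdef, smul_mulVec, hPmul, smul_smul]
    have h1 : (X *ᵥ x) ⬝ᵥ u₁ = σ₁ * (v₁ ⬝ᵥ x) := by rw [dotProduct_comm]; exact hu₁X x
    rw [sub_mulVec, hYx]
    simp only [sub_dotProduct, dotProduct_sub, smul_dotProduct, dotProduct_smul, smul_eq_mul]
    rw [h1, hu₁X x, hu₁u₁]
    ring
  have hWop : ∀ x : Fin n → ℝ, ((X - Y₀) *ᵥ x) ⬝ᵥ ((X - Y₀) *ᵥ x) ≤ τ ^ 2 * (x ⬝ᵥ x) := by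
    intro x
    rw [hWmulq, hquadX, hpars, Finset.mul_sum]
    rw [show v₁ ⬝ᵥ x = v i₀ ⬝ᵥ x from by rw [hv₁def]]
    rw [← Finset.add_sum_erase _ (fun i => μ i * (v i ⬝ᵥ x) ^ 2) (Finset.mem_univ i₀),
        ← Finset.add_sum_erase _ (fun i => τ ^ 2 * (v i ⬝ᵥ x) ^ 2) (Finset.mem_univ i₀)]
    have hrest : ∑ i ∈ Finset.univ.erase i₀, μ i * (v i ⬝ᵥ x) ^ 2
        ≤ ∑ i ∈ Finset.univ.erase i₀, τ ^ 2 * (v i ⬝ᵥ x) ^ 2 :=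
      Finset.sum_le_sum fun i hi =>
        mul_le_mul_of_nonneg_right (hμτ i (Finset.ne_of_mem_erase hi)) (sq_nonneg _)
    have hid : μ i₀ * (v i₀ ⬝ᵥ x) ^ 2 - (σ₁ ^ 2 - τ ^ 2) * (v i₀ ⬝ᵥ x) ^ 2
        = τ ^ 2 * (v i₀ ⬝ᵥ x) ^ 2 + (μ i₀ - σ₁ ^ 2) * (v i₀ ⬝ᵥ x) ^ 2 := by ring
    have hzero : (μ i₀ - σ₁ ^ 2) * (v i₀ ⬝ᵥ x) ^ 2 = 0 := by rw [hμi₀]; ring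
    linarith
  -- Hölder-type inequality
  have hHolder : ∀ Z : Matrix (Fin m) (Fin n) ℝ,
      STAux.fip (X - Y₀) Z ≤ τ * nuclearNorm Z := by
    intro Z
    have hB : (Zᵀ * Z).IsHermitian := Matrix.isHermitian_conjTranspose_mul_self Z
    obtain ⟨w, hwo, hwe, hwc⟩ := STAux.exists_eigenbasis (Zᵀ * Z) hB
    have hν0 : ∀ k, 0 ≤ hB.eigenvalues k := STAux.eig_nonneg Z
    have hnuc : nuclearNorm Z = ∑ k, Real.sqrt (hB.eigenvalues k) := rfl
    have hdec : STAux.fip (X - Y₀) Z = ∑ k, (Z *ᵥ w k) ⬝ᵥ ((X - Y₀) *ᵥ w k) :=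
      STAux.fip_decomp hwc (X - Y₀) Z
    rw [hdec, hnuc, Finset.mul_sum]
    refine Finset.sum_le_sum fun k _ => ?_
    have hwk : w k ⬝ᵥ w k = 1 := by simpa using hwo k k
    have hZw : (Z *ᵥ w k) ⬝ᵥ (Z *ᵥ w k) = hB.eigenvalues k := by
      rw [STAux.dot_XX, hwe k, dotProduct_smul, smul_eq_mul, hwk, mul_one]
    have hWw := hWop (w k)
    rw [hwk, mul_one] at hWw
    have hcs := STAux.dot_cauchy (Z *ᵥ w k) ((X - Y₀) *ᵥ w k)
    have hsq : Real.sqrt (hB.eigenvalues k) ^ 2 = hB.eigenvalues k := Real.sq_sqrt (hν0 k)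
    have hq0 : 0 ≤ τ * Real.sqrt (hB.eigenvalues k) := mul_nonneg hτ0 (Real.sqrt_nonneg _)
    have hWw0 : 0 ≤ ((X - Y₀) *ᵥ w k) ⬝ᵥ ((X - Y₀) *ᵥ w k) := STAux.dot_self_nonneg _
    have ht2 : ((Z *ᵥ w k) ⬝ᵥ ((X - Y₀) *ᵥ w k)) ^ 2
        ≤ (τ * Real.sqrt (hB.eigenvalues k)) ^ 2 := by
      calc ((Z *ᵥ w k) ⬝ᵥ ((X - Y₀) *ᵥ w k)) ^ 2
          ≤ ((Z *ᵥ w k) ⬝ᵥ (Z *ᵥ w k)) * (((X - Y₀) *ᵥ w k) ⬝ᵥ ((X - Y₀) *ᵥ w k)) := hcs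
        _ ≤ hB.eigenvalues k * τ ^ 2 := by
            rw [hZw]
            exact mul_le_mul_of_nonneg_left hWw (hν0 k)
        _ = (τ * Real.sqrt (hB.eigenvalues k)) ^ 2 := by rw [mul_pow, hsq]; ring
    exact STAux.le_of_sq_le_sq ht2 hq0
  -- nuclear norm of Y₀
  have hNY : nuclearNorm Y₀ = σ₁ - τ := by
    have hB : (Y₀ᵀ * Y₀).IsHermitian := Matrix.isHermitian_conjTranspose_mul_self Y₀
    obtain ⟨w, hwo, hwe, hwc⟩ := STAux.exists_eigenbasis (Y₀ᵀ * Y₀) hB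
    have hν0 : ∀ k, 0 ≤ hB.eigenvalues k := STAux.eig_nonneg Y₀
    have hnuc : nuclearNorm Y₀ = ∑ k, Real.sqrt (hB.eigenvalues k) := rfl
    have hYx : ∀ x, Y₀ *ᵥ x = ((σ₁ - τ) * (v₁ ⬝ᵥ x)) • u₁ := fun x => by
      rw [hYdef, smul_mulVec, hPmul, smul_smul]
    have hYT : Y₀ᵀ *ᵥ u₁ = (σ₁ - τ) • v₁ := by
      rw [hYdef, transpose_smul, smul_mulVec, hPTmul, hu₁u₁, one_smul]
    have hBx : ∀ x, (Y₀ᵀ * Y₀) *ᵥ x = ((σ₁ - τ) ^ 2 * (v₁ ⬝ᵥ x)) • v₁ := by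
      intro x
      rw [← mulVec_mulVec, hYx x, mulVec_smul, hYT, smul_smul]
      congr 1
      ring
    obtain ⟨c, hcdef⟩ : ∃ c : Fin n → ℝ, c = fun k => v₁ ⬝ᵥ w k := ⟨_, rfl⟩
    have hcval : ∀ k, c k = v₁ ⬝ᵥ w k := fun k => by rw [hcdef]
    have heig : ∀ k, hB.eigenvalues k • w k = ((σ₁ - τ) ^ 2 * c k) • v₁ := by
      intro k; rw [← hwe k, hBx, hcval]
    have hνval : ∀ k, hB.eigenvalues k = (σ₁ - τ) ^ 2 * c k ^ 2 := by
      intro k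
      have h := congrArg (fun y => y ⬝ᵥ w k) (heig k)
      simp only [smul_dotProduct, smul_eq_mul] at h
      rw [(show w k ⬝ᵥ w k = 1 by simpa using hwo k k), mul_one] at h
      rw [h, ← hcval k]
      ring
    have hsqrtν : ∀ k, Real.sqrt (hB.eigenvalues k) = (σ₁ - τ) * |c k| := by
      intro k
      rw [hνval k, show (σ₁ - τ) ^ 2 * c k ^ 2 = ((σ₁ - τ) * |c k|) ^ 2 by
        rw [mul_pow, sq_abs]]
      exact Real.sqrt_sq (mul_nonneg hστpos.le (abs_nonneg _))
    have hsumc : ∑ k, c k ^ 2 = 1 := by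
      have h := STAux.parseval hwc v₁
      rw [hv₁v₁] at h
      rw [show ∑ k, c k ^ 2 = ∑ k, (w k ⬝ᵥ v₁) ^ 2 from
        Finset.sum_congr rfl fun k _ => by rw [hcval k, dotProduct_comm]]
      exact h.symm
    have huniq : ∀ k l, k ≠ l → c k ≠ 0 → c l ≠ 0 → False := by
      intro k l hkl hck hcl
      have h := congrArg (fun y => w k ⬝ᵥ y) (heig l)
      simp only [dotProduct_smul, smul_eq_mul] at h
      have h0 : w k ⬝ᵥ w l = 0 := by have := hwo k l; simpa [hkl] using this
      rw [h0, mul_zero] at h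
      rw [dotProduct_comm (w k) v₁, ← hcval k] at h
      have hne : (σ₁ - τ) ^ 2 * c l * c k ≠ 0 :=
        mul_ne_zero (mul_ne_zero (pow_ne_zero 2 (ne_of_gt hστpos)) hcl) hck
      exact hne h.symm
    obtain ⟨k₀, hk₀⟩ : ∃ k, c k ≠ 0 := by
      by_contra h
      push_neg at h
      rw [Finset.sum_eq_zero (fun k _ => by rw [h k]; ring)] at hsumc
      norm_num at hsumc
    have hothers : ∀ l, l ≠ k₀ → c l = 0 := fun l hl =>
      by_contra fun h => huniq l k₀ hl h hk₀
    have hck₀ : c k₀ ^ 2 = 1 := by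
      rw [← hsumc, Finset.sum_eq_single k₀ (fun l _ hl => by rw [hothers l hl]; ring)
        (fun h => absurd (Finset.mem_univ k₀) h)]
    have habs : ∑ k, |c k| = 1 := by
      rw [Finset.sum_eq_single k₀ (fun l _ hl => by rw [hothers l hl]; simp)
        (fun h => absurd (Finset.mem_univ k₀) h)]
      rw [← Real.sqrt_sq_eq_abs, hck₀, Real.sqrt_one]
    rw [hnuc, Finset.sum_congr rfl fun k _ => hsqrtν k, ← Finset.mul_sum, habs, mul_one]
  -- key minimization inequality
  have hkey : ∀ Z : Matrix (Fin m) (Fin n) ℝ,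
      τ * nuclearNorm Y₀ + (1 / 2) * STAux.fip (Y₀ - X) (Y₀ - X)
        + (1 / 2) * STAux.fip (Z - Y₀) (Z - Y₀)
      ≤ τ * nuclearNorm Z + (1 / 2) * STAux.fip (Z - X) (Z - X) := by
    intro Z
    have hH := hHolder Z
    rw [STAux.fip_sub_left] at hH
    have e1 := STAux.fip_sub_sub Z X
    have e2 := STAux.fip_sub_sub Y₀ X
    have e3 := STAux.fip_sub_sub Z Y₀
    have c1 := STAux.fip_comm Z X
    have c2 := STAux.fip_comm Z Y₀
    have c3 := STAux.fip_comm Y₀ X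
    have hz : σ₁ * (σ₁ - τ) - (σ₁ - τ) ^ 2 - τ * (σ₁ - τ) = 0 := by ring
    rw [hNY]
    linarith [hfipXY, hfipYY]
  have hminY : ∀ Z : Matrix (Fin m) (Fin n) ℝ,
      τ * nuclearNorm Y₀ + (1 / 2) * frobNorm (Y₀ - X) ^ 2
      ≤ τ * nuclearNorm Z + (1 / 2) * frobNorm (Z - X) ^ 2 := by
    intro Z
    rw [STAux.frobNorm_sq, STAux.frobNorm_sq]
    have h := hkey Z
    have h0 := STAux.fip_self_nonneg (Z - Y₀)
    linarith
  -- frobenius norms of T₀ and Y₀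
  have hfrobY : frobNorm Y₀ = σ₁ - τ := by
    have h := STAux.frobNorm_sq Y₀
    rw [hfipYY] at h
    rw [← Real.sqrt_sq (STAux.frobNorm_nonneg Y₀), h, Real.sqrt_sq hστpos.le]
  have hfrobT : frobNorm T₀ = σ₁ := by
    have h := STAux.frobNorm_sq T₀
    rw [hfipTT] at h
    rw [← Real.sqrt_sq (STAux.frobNorm_nonneg T₀), h, Real.sqrt_sq hσ₁pos.le]
  -- assemble
  have hTprop : T₀.rank ≤ 1 ∧ ∀ Z : Matrix (Fin m) (Fin n) ℝ, Z.rank ≤ 1 →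
      frobNorm (X - T₀) ≤ frobNorm (X - Z) := by
    refine ⟨hTrank, fun Z hZ => ?_⟩
    rw [STAux.frob_le_iff, hEYT]
    exact (hEY Z hZ).1
  have hTuniq : ∀ T' : Matrix (Fin m) (Fin n) ℝ,
      (T'.rank ≤ 1 ∧ ∀ Z : Matrix (Fin m) (Fin n) ℝ, Z.rank ≤ 1 →
        frobNorm (X - T') ≤ frobNorm (X - Z)) → T' = T₀ := by
    rintro T' ⟨h1, h2⟩
    have h3 := h2 T₀ hTrank
    rw [STAux.frob_le_iff, hEYT] at h3
    exact (hEY T' h1).2 h3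
  have hYuniq : ∀ Y' : Matrix (Fin m) (Fin n) ℝ,
      (∀ Z : Matrix (Fin m) (Fin n) ℝ,
        τ * nuclearNorm Y' + (1 / 2) * frobNorm (Y' - X) ^ 2 ≤
          τ * nuclearNorm Z + (1 / 2) * frobNorm (Z - X) ^ 2) → Y' = Y₀ := by
    intro Y' h
    have h1 := h Y₀
    rw [STAux.frobNorm_sq, STAux.frobNorm_sq] at h1
    have h2 := hkey Y'
    have h3 : STAux.fip (Y' - Y₀) (Y' - Y₀) ≤ 0 := by linarith
    have h4 : Y' - Y₀ = 0 := STAux.fip_self_eq_zero h3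
    exact sub_eq_zero.mp h4
  refine ⟨⟨T₀, hTprop, hTuniq⟩, ⟨Y₀, hminY, hYuniq⟩, ?_⟩
  intro T' Y' hT' hY'
  have hT'T := hTuniq T' hT'
  have hY'Y := hYuniq Y' hY'
  rw [hT'T, hY'Y, hfrobY, hfrobT]
  constructor
  · rw [hYdef, hTdef, smul_smul]
    congr 1
    field_simp
  · rw [hYdef, hTdef, smul_smul, smul_smul]
    congr 1
    field_simp
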